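/- Let 0 ≤ q < 1, 0 < p < 1 and ν ∈ ℝ with p = q^ν/(q^ν + q^{-ν}). Define the Markov kernel Π on S = {(y,z) ∈ ℤ² : z ≥ y ≥ 0} by Π((y,z),(y+1,z+1)) = p, Π((y,z),(y,z+1)) = (1-p)q^y, Π((y,z),(y-1,z-1)) = (1-p)(1-q^y), and the kernel Q on ℕ by Q(z,z+1) = (1-q^{z+1})ψ_ν(z+1)/((q^ν+q^{-ν})ψ_ν(z)), Q(z,z-1) = ψ_ν(z-1)/((q^ν+q^{-ν})ψ_ν(z)). Define K(z,(y,z')) = δ_{z,z'} q^{ν(2y-z)} / (ψ_ν(z)(q)_y(q)_{z-y}). Then the intertwining relation Q K = K Π holds, i.e. for all z ∈ ℕ and (y,z') ∈ S: Σ_{z''} Q(z,z'') K(z'',(y,z')) = Σ_{(y'',z'')} K(z,(y'',z'')) Π((y'',z''),(y,z')). -/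

import Mathlib

open Finset

/-- The q-Pochhammer symbol `(q)ₙ = ∏_{k=1}^n (1 - q^k)`. -/
noncomputable def qPochR (q : ℝ) (n : ℕ) : ℝ :=
  ∏ k ∈ Finset.range n, (1 - q ^ (k + 1))

/-- The q-deformed Whittaker function `ψ_ν(z)` (real parameter `ν`),
extended by `0` to negative integers. -/
noncomputable def qWhit (q ν : ℝ) : ℤ → ℝ := fun z =>
  if z < 0 then 0
  else ∑ y ∈ Finset.range (z.toNat + 1),
    Real.rpow q (ν * (2 * (y : ℝ) - (z.toNat : ℝ))) / (qPochR q y * qPochR q (z.toNat - y))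

/-- Transition kernel `Π` on the state space `S = {(y,z) : z ≥ y ≥ 0}`,
extended by zero. -/
noncomputable def PiKer (q p : ℝ) : ℕ × ℕ → ℕ × ℕ → ℝ := fun s t =>
  if t.1 = s.1 + 1 ∧ t.2 = s.2 + 1 then p
  else if t.1 = s.1 ∧ t.2 = s.2 + 1 then (1 - p) * q ^ s.1
  else if t.1 + 1 = s.1 ∧ t.2 + 1 = s.2 then (1 - p) * (1 - q ^ s.1)
  else 0

/-- Transition kernel `Q` on `ℕ`, extended by zero. -/
noncomputable def QKer (q ν : ℝ) : ℕ → ℕ → ℝ := fun z z' =>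
  if z' = z + 1 then
    (1 - q ^ (z + 1)) / (Real.rpow q ν + Real.rpow q (-ν)) * (qWhit q ν (z + 1) / qWhit q ν z)
  else if z' + 1 = z then
    (1 / (Real.rpow q ν + Real.rpow q (-ν))) * (qWhit q ν ((z : ℤ) - 1) / qWhit q ν z)
  else 0

/-- The intertwining kernel `K(z,(y,z')) = δ_{z,z'} q^{ν(2y-z)} / (ψ_ν(z)(q)_y(q)_{z-y})`,
supported on the state space `S`. -/
noncomputable def KKer (q ν : ℝ) : ℕ → ℕ × ℕ → ℝ := fun z yz =>
  if yz.2 = z ∧ yz.1 ≤ z then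
    Real.rpow q (ν * (2 * (yz.1 : ℝ) - (z : ℝ))) /
      (qWhit q ν z * qPochR q yz.1 * qPochR q (z - yz.1))
  else 0

lemma qPochR_pos {q : ℝ} (hq0 : 0 ≤ q) (hq1 : q < 1) (n : ℕ) : 0 < qPochR q n := by
  apply Finset.prod_pos
  intro k _
  have : q ^ (k+1) < 1 := pow_lt_one₀ hq0 hq1 (Nat.succ_ne_zero k)
  linarith

lemma qPochR_succ (q : ℝ) (n : ℕ) : qPochR q (n+1) = qPochR q n * (1 - q^(n+1)) :=
  Finset.prod_range_succ _ _

lemma qWhit_natCast (q ν : ℝ) (n : ℕ) :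
    qWhit q ν (n : ℤ) = ∑ y ∈ Finset.range (n+1),
      Real.rpow q (ν * (2*(y:ℝ) - (n:ℝ))) / (qPochR q y * qPochR q (n - y)) := by
  simp [qWhit]

lemma qWhit_pos {q ν : ℝ} (hq0 : 0 ≤ q) (hq1 : q < 1) (hqν : 0 < q ∨ ν = 0) (n : ℕ) :
    0 < qWhit q ν (n : ℤ) := by
  rw [qWhit_natCast]
  apply Finset.sum_pos
  · intro i _
    apply div_pos
    · rcases hqν with h | h
      · exact Real.rpow_pos_of_pos h _
      · simp [h]
    · exact mul_pos (qPochR_pos hq0 hq1 _) (qPochR_pos hq0 hq1 _)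
  · exact Finset.nonempty_range_add_one


private lemma alg1 (a A W0 W1 P0 Pz w : ℝ) (ha : a ≠ 0) (hd : a^2+1 ≠ 0)
    (hW0 : W0 ≠ 0) (hW1 : W1 ≠ 0) (hP0 : P0 ≠ 0) (hPz : Pz ≠ 0) (hw : 1 - w ≠ 0) :
    (1 - w) / ((a^2+1)/a) * (W1 / W0) * (A / (W1 * P0 * (Pz * (1 - w))))
      = A * a / (W0 * P0 * Pz) * (1/(a^2+1) * 1) := by
  field_simp

private lemma alg2 (a A W0 W1 P0 Pz w : ℝ) (ha : a ≠ 0) (hd : a^2+1 ≠ 0)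
    (hW0 : W0 ≠ 0) (hW1 : W1 ≠ 0) (hP0 : P0 ≠ 0) (hPz : Pz ≠ 0) (hw : 1 - w ≠ 0) :
    (1 - w) / ((a^2+1)/a) * (W1 / W0) * (A / (W1 * (Pz * (1 - w)) * P0))
      = A / a / (W0 * Pz * P0) * (a^2/(a^2+1)) := by
  field_simp

private lemma alg3 (a A W0 W1 Pm Pn u v : ℝ) (ha : a ≠ 0) (hd : a^2+1 ≠ 0)
    (hW0 : W0 ≠ 0) (hW1 : W1 ≠ 0) (hPm : Pm ≠ 0) (hPn : Pn ≠ 0)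
    (hu : 1 - u ≠ 0) (hv : 1 - v ≠ 0) :
    (1 - u*v) / ((a^2+1)/a) * (W1 / W0) * (A / (W1 * (Pm*(1-u)) * (Pn*(1-v))))
      = A / a / (W0 * Pm * (Pn*(1-v))) * (a^2/(a^2+1))
        + A * a / (W0 * (Pm*(1-u)) * Pn) * (1/(a^2+1) * u) := by
  field_simp
  ring

private lemma alg4 (a B W0 W1 Py Pn u : ℝ) (ha : a ≠ 0) (hd : a^2+1 ≠ 0)
    (hW0 : W0 ≠ 0) (hW1 : W1 ≠ 0) (hPy : Py ≠ 0) (hPn : Pn ≠ 0) (hu : 1 - u ≠ 0) :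
    1 / ((a^2+1)/a) * (W0 / W1) * (B / (W0 * Py * Pn))
      = B * a / (W1 * (Py*(1-u)) * Pn) * (1/(a^2+1) * (1-u)) := by
  field_simp

/-- Intertwining relation `Q K = K Π`:
for all `z ∈ ℕ` and `(y,z') ∈ S`,
`Σ_{z''} Q(z,z'') K(z'',(y,z')) = Σ_{(y'',z'')} K(z,(y'',z'')) Π((y'',z''),(y,z'))`,
where the sums range over all states carrying nonzero weight. -/
theorem qKernel_intertwining (q p ν : ℝ) (hq0 : 0 ≤ q) (hq1 : q < 1)
    (hp0 : 0 < p) (hp1 : p < 1)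
    (hp : p = Real.rpow q ν / (Real.rpow q ν + Real.rpow q (-ν)))
    (z : ℕ) (y z' : ℕ) (hyz : y ≤ z') :
    ∑ z'' ∈ Finset.range (z + 2), QKer q ν z z'' * KKer q ν z'' (y, z')
      = ∑ s ∈ Finset.range (z + 1) ×ˢ Finset.range (z + 1),
          KKer q ν z s * PiKer q p s (y, z') := by
  simp only [Real.rpow_eq_pow] at hp
  have hq1' : ∀ n : ℕ, (0:ℝ) < 1 - q ^ (n+1) := fun n => by
    have := pow_lt_one₀ hq0 hq1 (n := n+1) (by omega)
    linarith
  have ha0 : 0 ≤ q ^ (ν:ℝ) := Real.rpow_nonneg hq0 ν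
  have hb0 : 0 ≤ q ^ (-ν) := Real.rpow_nonneg hq0 (-ν)
  have hc : 0 < q ^ (ν:ℝ) + q ^ (-ν) := by
    rcases lt_or_eq_of_le (by positivity : (0:ℝ) ≤ q ^ (ν:ℝ) + q ^ (-ν)) with h | h
    · exact h
    · rw [hp, ← h, div_zero] at hp0; exact absurd hp0 (lt_irrefl 0)
  have ha : 0 < q ^ (ν:ℝ) := by
    have h2 : q ^ (ν:ℝ) = p * (q ^ (ν:ℝ) + q ^ (-ν)) := by
      rw [hp, div_mul_cancel₀ _ (ne_of_gt hc)]
    rw [h2]; positivity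
  have hqν : 0 < q ∨ ν = 0 := by
    rcases hq0.lt_or_eq with h | h
    · exact Or.inl h
    · right; by_contra hν
      rw [← h, Real.zero_rpow hν] at ha; exact absurd ha (lt_irrefl 0)
  have hR : ∀ s t u : ℝ, s + t = u →
      q ^ (ν*s) * q ^ (ν*t) = q ^ (ν*u) := by
    intro s t u h
    rcases hqν with hq | hν
    · rw [← Real.rpow_add hq, ← h]; ring_nf
    · simp [hν]
  have haR : q ^ (ν:ℝ) = q ^ (ν * 1) := by rw [mul_one]
  have hbinv : q ^ (-ν) = (q ^ (ν:ℝ))⁻¹ := Real.rpow_neg hq0 ν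
  have hd : (0:ℝ) < (q^(ν:ℝ))^2 + 1 := by positivity
  have hpa : p = (q^(ν:ℝ))^2 / ((q^(ν:ℝ))^2 + 1) := by
    rw [hp, hbinv]
    rw [div_eq_div_iff (by rw [← hbinv]; exact hc.ne') hd.ne']
    field_simp
  have hpb : 1 - p = 1 / ((q^(ν:ℝ))^2 + 1) := by
    rw [hpa]
    field_simp
    ring
  have hcc : q ^ (ν:ℝ) + q ^ (-ν) = ((q^(ν:ℝ))^2 + 1) / q^(ν:ℝ) := by
    rw [hbinv]
    field_simp
  have hW : ∀ n : ℕ, 0 < qWhit q ν (n:ℤ) := qWhit_pos hq0 hq1 hqν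
  have hPne : ∀ n : ℕ, qPochR q n ≠ 0 := fun n => (qPochR_pos hq0 hq1 n).ne'
  have eK : ∀ (m y0 : ℕ), y0 ≤ m → KKer q ν m (y0, m)
      = q ^ (ν * (2*(y0:ℝ) - (m:ℝ))) / (qWhit q ν (m:ℤ) * qPochR q y0 * qPochR q (m - y0)) := by
    intro m y0 h
    simp [KKer, h, Real.rpow_eq_pow]
  by_cases h1 : z' = z + 1
  · -- case z' = z + 1
    subst h1
    rw [Finset.sum_eq_single_of_mem (z+1) (by simp)
      (fun b _ hb => by simp [KKer, Ne.symm hb])]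
    rw [Finset.sum_product]
    have hinner : ∀ y'' ∈ Finset.range (z+1),
        (∑ z'' ∈ Finset.range (z+1), KKer q ν z (y'', z'') * PiKer q p (y'', z'') (y, z+1))
        = KKer q ν z (y'', z) * PiKer q p (y'', z) (y, z+1) := fun y'' _ =>
      Finset.sum_eq_single_of_mem z (Finset.self_mem_range_succ z)
        (fun b _ hb => by simp [KKer, hb])
    rw [Finset.sum_congr rfl hinner]
    have eQ1 : QKer q ν z (z+1) = (1 - q^(z+1)) / (q^(ν:ℝ) + q^(-ν))
        * (qWhit q ν ((z+1:ℕ):ℤ) / qWhit q ν (z:ℤ)) := by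
      simp only [QKer, if_pos rfl, Real.rpow_eq_pow]
      norm_num
    have hPiz : ∀ b : ℕ, b + 1 ≠ y → b ≠ y → PiKer q p (b, z) (y, z+1) = 0 := by
      intro b hb1 hb2
      simp only [PiKer]
      rw [if_neg (by omega), if_neg (by omega), if_neg (by omega)]
    rcases Nat.lt_or_ge y 1 with hy | hy1
    · -- y = 0
      have hy0 : y = 0 := by omega
      subst hy0
      rw [Finset.sum_eq_single_of_mem 0 (by simp)
        (fun b _ hb => by rw [hPiz b (by omega) (by omega), mul_zero])]
      have ePi : PiKer q p (0, z) (0, z+1) = (1-p) * q ^ (0:ℕ) := by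
        simp [PiKer]
      rw [eQ1, eK (z+1) 0 (by omega), eK z 0 (by omega), ePi, hpb, hcc]
      rw [Nat.sub_zero, Nat.sub_zero, qPochR_succ]
      have hE : q ^ (ν * (2*((0:ℕ):ℝ) - ((z:ℕ):ℝ))) * q ^ (ν * (-1:ℝ))
          = q ^ (ν * (2*((0:ℕ):ℝ) - ((z+1:ℕ):ℝ))) := hR _ _ _ (by push_cast; ring)
      have hF : q ^ (ν * (2*((0:ℕ):ℝ) - ((z:ℕ):ℝ)))
          = q ^ (ν * (2*((0:ℕ):ℝ) - ((z+1:ℕ):ℝ))) * (q ^ (ν:ℝ)) := by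
        have h0 : q ^ (ν * (-1:ℝ)) * q ^ (ν * (1:ℝ)) = q ^ (ν * (0:ℝ)) := hR _ _ _ (by ring)
        have h00 : q ^ (ν * (0:ℝ)) = 1 := by rw [mul_zero, Real.rpow_zero]
        rw [← hE, mul_assoc, haR, h0, h00, mul_one]
      rw [hF]
      exact alg1 (q^(ν:ℝ)) (q ^ (ν * (2*((0:ℕ):ℝ) - ((z+1:ℕ):ℝ)))) (qWhit q ν (z:ℤ))
        (qWhit q ν ((z+1:ℕ):ℤ)) (qPochR q 0) (qPochR q z) (q^(z+1))
        ha.ne' hd.ne' (hW z).ne' (hW (z+1)).ne' (hPne 0) (hPne z) (hq1' z).ne'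
    rcases Nat.lt_or_ge z y with hzy | hyz2
    · -- y = z+1
      have hyz1 : y = z + 1 := by omega
      subst hyz1
      rw [Finset.sum_eq_single_of_mem z (Finset.self_mem_range_succ z)
        (fun b hbm hb => by
          have := Finset.mem_range.mp hbm
          rw [hPiz b (by omega) (by omega), mul_zero])]
      have ePi : PiKer q p (z, z) (z+1, z+1) = p := by
        simp [PiKer]
      rw [eQ1, eK (z+1) (z+1) le_rfl, eK z z le_rfl, ePi, hpa, hcc]
      rw [Nat.sub_self, Nat.sub_self, qPochR_succ]
      have hE : q ^ (ν * (2*((z:ℕ):ℝ) - ((z:ℕ):ℝ))) * q ^ (ν * (1:ℝ))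
          = q ^ (ν * (2*((z+1:ℕ):ℝ) - ((z+1:ℕ):ℝ))) := hR _ _ _ (by push_cast; ring)
      have hF : q ^ (ν * (2*((z:ℕ):ℝ) - ((z:ℕ):ℝ)))
          = q ^ (ν * (2*((z+1:ℕ):ℝ) - ((z+1:ℕ):ℝ))) / (q ^ (ν:ℝ)) := by
        rw [eq_div_iff ha.ne', ← hE, ← haR]
      rw [hF]
      exact alg2 (q^(ν:ℝ)) (q ^ (ν * (2*((z+1:ℕ):ℝ) - ((z+1:ℕ):ℝ)))) (qWhit q ν (z:ℤ))
        (qWhit q ν ((z+1:ℕ):ℤ)) (qPochR q 0) (qPochR q z) (q^(z+1))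
        ha.ne' hd.ne' (hW z).ne' (hW (z+1)).ne' (hPne 0) (hPne z) (hq1' z).ne'
    · -- 1 ≤ y ≤ z : two terms
      have hsub : ({y-1, y} : Finset ℕ) ⊆ Finset.range (z+1) := by
        intro b hb
        simp only [Finset.mem_insert, Finset.mem_singleton] at hb
        rw [Finset.mem_range]; omega
      rw [← Finset.sum_subset hsub (fun b _ hb => by
        simp only [Finset.mem_insert, Finset.mem_singleton, not_or] at hb
        rw [hPiz b (by omega) (by omega), mul_zero])]
      rw [Finset.sum_pair (by omega : y - 1 ≠ y)]
      have ePi1 : PiKer q p (y-1, z) (y, z+1) = p := by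
        simp [PiKer, (show y - 1 + 1 = y from by omega)]
      have ePi2 : PiKer q p (y, z) (y, z+1) = (1-p) * q ^ y := by
        simp only [PiKer]
        rw [if_neg (by first | omega | simp), if_pos (by first | omega | simp)]
      rw [eQ1, eK (z+1) y hyz, eK z (y-1) (by omega), eK z y hyz2, ePi1, ePi2, hpb, hpa, hcc]
      rw [show z - (y-1) = z+1-y from by omega]
      have hE1 : q ^ (ν * (2*((y-1:ℕ):ℝ) - ((z:ℕ):ℝ))) * q ^ (ν * (1:ℝ))
          = q ^ (ν * (2*((y:ℕ):ℝ) - ((z+1:ℕ):ℝ))) :=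
        hR _ _ _ (by push_cast [Nat.cast_sub hy1]; ring)
      have hE2 : q ^ (ν * (2*((y:ℕ):ℝ) - ((z:ℕ):ℝ))) * q ^ (ν * (-1:ℝ))
          = q ^ (ν * (2*((y:ℕ):ℝ) - ((z+1:ℕ):ℝ))) := hR _ _ _ (by push_cast; ring)
      have hF1 : q ^ (ν * (2*((y-1:ℕ):ℝ) - ((z:ℕ):ℝ)))
          = q ^ (ν * (2*((y:ℕ):ℝ) - ((z+1:ℕ):ℝ))) / (q ^ (ν:ℝ)) := by
        rw [eq_div_iff ha.ne', ← hE1, ← haR]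
      have hF2 : q ^ (ν * (2*((y:ℕ):ℝ) - ((z:ℕ):ℝ)))
          = q ^ (ν * (2*((y:ℕ):ℝ) - ((z+1:ℕ):ℝ))) * (q ^ (ν:ℝ)) := by
        have h0 : q ^ (ν * (-1:ℝ)) * q ^ (ν * (1:ℝ)) = q ^ (ν * (0:ℝ)) := hR _ _ _ (by ring)
        have h00 : q ^ (ν * (0:ℝ)) = 1 := by rw [mul_zero, Real.rpow_zero]
        rw [← hE2, mul_assoc, haR, h0, h00, mul_one]
      have hPy : qPochR q y = qPochR q (y-1) * (1 - q^y) := by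
        have h := qPochR_succ q (y-1)
        rw [show y-1+1 = y from by omega] at h
        exact h
      have hPzy : qPochR q (z+1-y) = qPochR q (z-y) * (1 - q^(z+1-y)) := by
        have h := qPochR_succ q (z-y)
        rw [show z-y+1 = z+1-y from by omega] at h
        exact h
      have hqq : q^(z+1) = q^y * q^(z+1-y) := by
        rw [← pow_add]; congr 1; omega
      have hu : (1:ℝ) - q^y ≠ 0 := by
        have h := hq1' (y-1)
        rw [show y-1+1 = y from by omega] at h
        exact h.ne'
      have hv : (1:ℝ) - q^(z+1-y) ≠ 0 := by
        have h := hq1' (z-y)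
        rw [show z-y+1 = z+1-y from by omega] at h
        exact h.ne'
      rw [hF1, hF2, hPy, hPzy, hqq]
      exact alg3 (q^(ν:ℝ)) (q ^ (ν * (2*((y:ℕ):ℝ) - ((z+1:ℕ):ℝ)))) (qWhit q ν (z:ℤ))
        (qWhit q ν ((z+1:ℕ):ℤ)) (qPochR q (y-1)) (qPochR q (z-y)) (q^y) (q^(z+1-y))
        ha.ne' hd.ne' (hW z).ne' (hW (z+1)).ne' (hPne (y-1)) (hPne (z-y)) hu hv
  by_cases h2 : z' + 1 = z
  · -- case z' = z - 1
    subst h2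
    rw [Finset.sum_eq_single_of_mem z' (by simp [Finset.mem_range]; omega)
      (fun b _ hb => by simp [KKer, Ne.symm hb])]
    rw [Finset.sum_product]
    have hinner : ∀ y'' ∈ Finset.range (z'+1+1),
        (∑ z'' ∈ Finset.range (z'+1+1), KKer q ν (z'+1) (y'', z'') * PiKer q p (y'', z'') (y, z'))
        = KKer q ν (z'+1) (y'', z'+1) * PiKer q p (y'', z'+1) (y, z') := fun y'' _ =>
      Finset.sum_eq_single_of_mem (z'+1) (Finset.self_mem_range_succ (z'+1))
        (fun b _ hb => by simp [KKer, hb])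
    rw [Finset.sum_congr rfl hinner]
    rw [Finset.sum_eq_single_of_mem (y+1) (Finset.mem_range.mpr (by omega))
      (fun b _ hb => by
        have hPi0 : PiKer q p (b, z'+1) (y, z') = 0 := by
          simp only [PiKer]
          rw [if_neg (by omega), if_neg (by omega), if_neg (by omega)]
        rw [hPi0, mul_zero])]
    have eQ2 : QKer q ν (z'+1) z' = 1 / (q^(ν:ℝ) + q^(-ν))
        * (qWhit q ν (z':ℤ) / qWhit q ν ((z'+1:ℕ):ℤ)) := by
      simp only [QKer, Real.rpow_eq_pow]
      rw [if_neg (by omega), if_pos (by first | rfl | simp),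
        show ((z'+1:ℕ):ℤ) - 1 = (z':ℤ) from by push_cast; ring]
    have ePi : PiKer q p (y+1, z'+1) (y, z') = (1-p) * (1 - q^(y+1)) := by
      simp only [PiKer]
      rw [if_neg (by first | omega | simp), if_neg (by first | omega | simp), if_pos (by first | omega | simp)]
    rw [eQ2, eK z' y hyz, eK (z'+1) (y+1) (by omega), ePi, hpb, hcc]
    rw [show z'+1-(y+1) = z'-y from by omega, qPochR_succ]
    have hE : q ^ (ν * (2*((y:ℕ):ℝ) - ((z':ℕ):ℝ))) * q ^ (ν * (1:ℝ))
        = q ^ (ν * (2*((y+1:ℕ):ℝ) - ((z'+1:ℕ):ℝ))) := hR _ _ _ (by push_cast; ring)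
    rw [← hE, ← haR]
    exact alg4 (q^(ν:ℝ)) (q ^ (ν * (2*((y:ℕ):ℝ) - ((z':ℕ):ℝ)))) (qWhit q ν (z':ℤ))
      (qWhit q ν ((z'+1:ℕ):ℤ)) (qPochR q y) (qPochR q (z'-y)) (q^(y+1))
      ha.ne' hd.ne' (hW z').ne' (hW (z'+1)).ne' (hPne y) (hPne (z'-y)) (hq1' y).ne'
  · -- both sides zero
    rw [Finset.sum_eq_zero, Finset.sum_eq_zero]
    · rintro ⟨y'', z''⟩ hm
      by_cases hz : z'' = z
      · subst hz
        have : PiKer q p (y'', z'') (y, z') = 0 := by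
          simp only [PiKer]
          split_ifs with g1 g2 g3
          · exact absurd g1.2 h1
          · exact absurd g2.2 h1
          · exact absurd g3.2 (by omega)
          · rfl
        rw [this, mul_zero]
      · have : KKer q ν z (y'', z'') = 0 := by
          simp [KKer, hz]
        rw [this, zero_mul]
    · intro z'' hm
      by_cases hz : z'' = z'
      · subst hz
        have : QKer q ν z z'' = 0 := by
          simp only [QKer]
          rw [if_neg (by omega), if_neg (by omega)]
        rw [this, zero_mul]
      · have : KKer q ν z'' (y, z') = 0 := by
          simp [KKer, Ne.symm hz]
        rw [this, mul_zero]
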